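/- The LP relaxation of an MWTM instance is feasible if and only if the number of leaves of the tree is at least the number of tasks m. -/

import Mathlib

attribute [local instance] Classical.propDecidable

/-- A rooted tree on a finite vertex type `V`, given by a parent function. -/
structure OrgTree (V : Type) [Fintype V] [DecidableEq V] where
  root : V
  parent : V → V
  parent_root : parent root = root
  reach : ∀ v : V, ∃ k : ℕ, parent^[k] v = root

variable {V : Type} [Fintype V] [DecidableEq V]

/-- `T.Anc u v` : `u` is a (weak) ancestor of `v`, i.e. `u` lies on the
path from the root to `v`. -/
def OrgTree.Anc (T : OrgTree V) (u v : V) : Prop :=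
  ∃ k : ℕ, T.parent^[k] v = u

/-- A leaf is a node with no children. -/
def OrgTree.IsLeaf (T : OrgTree V) (v : V) : Prop :=
  ∀ u : V, T.parent u = v → u = v

/-- An antichain: no element is a (weak) ancestor of another distinct element. -/
def OrgTree.IsAntichain (T : OrgTree V) (S : Set V) : Prop :=
  ∀ u ∈ S, ∀ v ∈ S, u ≠ v → ¬ T.Anc u v

/-- Feasibility for the LP relaxation of the MWTM ILP:
nonnegativity, per-node sums at most 1, per-task sums equal to 1, and
for every leaf the total assignment along the root-to-leaf path at most 1. -/
def LPFeasible (T : OrgTree V) (m : ℕ) (x : V → Fin m → ℝ) : Prop :=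
  (∀ i j, 0 ≤ x i j) ∧
  (∀ i : V, ∑ j : Fin m, x i j ≤ 1) ∧
  (∀ j : Fin m, ∑ i : V, x i j = 1) ∧
  (∀ k : V, T.IsLeaf k →
    ∑ i ∈ Finset.univ.filter (fun i => T.Anc i k), ∑ j : Fin m, x i j ≤ 1)

/-- An effective leaf w.r.t. `x`: a node with a positive assignment none of
whose strict descendants has a positive assignment. -/
def EffLeaf (T : OrgTree V) (m : ℕ) (x : V → Fin m → ℝ) (i : V) : Prop :=
  (∃ j : Fin m, 0 < x i j) ∧
    ∀ v : V, T.Anc i v → v ≠ i → ∀ j : Fin m, x v j = 0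

noncomputable def OrgTree.depth (T : OrgTree V) (v : V) : ℕ := Nat.find (T.reach v)

lemma OrgTree.depth_spec (T : OrgTree V) (v : V) : T.parent^[T.depth v] v = T.root :=
  Nat.find_spec (T.reach v)

lemma OrgTree.depth_eq_zero (T : OrgTree V) {v : V} (h : T.depth v = 0) : v = T.root := by
  have := T.depth_spec v; rw [h] at this; exact this

lemma OrgTree.depth_parent_lt (T : OrgTree V) {v : V} (h : v ≠ T.root) :
    T.depth (T.parent v) < T.depth v := by
  have h1 : 1 ≤ T.depth v := by
    rcases Nat.eq_zero_or_pos (T.depth v) with h0 | h0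
    · exact absurd (T.depth_eq_zero h0) h
    · exact h0
  have : T.parent^[T.depth v - 1] (T.parent v) = T.root := by
    rw [← Function.iterate_succ_apply, Nat.succ_eq_add_one, Nat.sub_add_cancel h1]
    exact T.depth_spec v
  have h2 : T.depth (T.parent v) ≤ T.depth v - 1 := Nat.find_le this
  omega

lemma OrgTree.anc_depth (T : OrgTree V) {d v : V} (h : T.Anc d v) (hne : d ≠ v) :
    T.depth d < T.depth v := by
  obtain ⟨k, hk⟩ := h
  induction k generalizing v with
  | zero => exact absurd hk.symm hne
  | succ n ih =>
    by_cases hv : v = T.root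
    · subst hv
      rw [Function.iterate_fixed T.parent_root] at hk
      exact absurd hk.symm hne
    · have hlt := T.depth_parent_lt hv
      rw [Function.iterate_succ_apply] at hk
      by_cases hd : d = T.parent v
      · subst hd; exact hlt
      · exact lt_trans (ih hd hk) hlt

lemma OrgTree.anc_trans (T : OrgTree V) {a b c : V} (h1 : T.Anc a b) (h2 : T.Anc b c) :
    T.Anc a c := by
  obtain ⟨k, hk⟩ := h1; obtain ⟨l, hl⟩ := h2
  exact ⟨k + l, by rw [Function.iterate_add_apply, hl, hk]⟩

lemma OrgTree.anc_total (T : OrgTree V) {u v w : V} (h1 : T.Anc u w) (h2 : T.Anc v w) :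
    T.Anc u v ∨ T.Anc v u := by
  obtain ⟨a, ha⟩ := h1; obtain ⟨b, hb⟩ := h2
  rcases le_total a b with h | h
  · right
    exact ⟨b - a, by rw [← ha, ← Function.iterate_add_apply, Nat.sub_add_cancel h, hb]⟩
  · left
    exact ⟨a - b, by rw [← hb, ← Function.iterate_add_apply, Nat.sub_add_cancel h, ha]⟩

lemma OrgTree.leaf_anc_eq (T : OrgTree V) {u k : V} (hu : T.IsLeaf u) (h : T.Anc u k) :
    u = k := by
  obtain ⟨n, hn⟩ := h
  induction n generalizing k with
  | zero => exact hn.symm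
  | succ n ih =>
    rw [Function.iterate_succ_apply] at hn
    have h1 : u = T.parent k := ih hn
    exact (hu k h1.symm).symm

lemma OrgTree.exists_leaf_below (T : OrgTree V) (e : V) :
    ∃ ℓ : V, T.IsLeaf ℓ ∧ T.Anc e ℓ := by
  classical
  have hne : (Finset.univ.filter (fun v => T.Anc e v)).Nonempty :=
    ⟨e, by simp only [Finset.mem_filter, Finset.mem_univ, true_and]; exact ⟨0, rfl⟩⟩
  obtain ⟨ℓ, hℓ, hmax⟩ := Finset.exists_max_image _ T.depth hne
  simp only [Finset.mem_filter, Finset.mem_univ, true_and] at hℓ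
  refine ⟨ℓ, ?_, hℓ⟩
  intro u hu
  by_contra hne'
  have hanc : T.Anc ℓ u := ⟨1, by simpa using hu⟩
  have h1 : T.Anc e u := T.anc_trans hℓ hanc
  have h2 := hmax u (by simp [h1])
  have := T.anc_depth hanc (fun h => hne' h.symm)
  omega

/-- The LP relaxation of an MWTM instance is feasible iff the
number of leaves of the tree is at least the number `m` of tasks. -/
theorem lp_feasible_iff_leaves (T : OrgTree V) (m : ℕ) :
    (∃ x : V → Fin m → ℝ, LPFeasible T m x) ↔
      m ≤ {v : V | T.IsLeaf v}.ncard := by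
  classical
  have hncard : {v : V | T.IsLeaf v}.ncard
      = (Finset.univ.filter (fun v => T.IsLeaf v)).card := by
    rw [Set.ncard_eq_toFinset_card']
    congr 1
    ext v; simp
  constructor
  · rintro ⟨x, hx0, hx1, hx2, hx3⟩
    set mass : V → ℝ := fun i => ∑ j, x i j with hmass
    have hmass0 : ∀ i, 0 ≤ mass i := fun i => Finset.sum_nonneg fun j _ => hx0 i j
    have key : ∀ i : V, 0 < mass i → ∃ d, T.Anc i d ∧ 0 < mass d ∧
        ∀ v, T.Anc d v → 0 < mass v → v = d := by
      intro i hi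
      have hiin : i ∈ Finset.univ.filter (fun v => T.Anc i v ∧ 0 < mass v) := by
        simp only [Finset.mem_filter, Finset.mem_univ, true_and]
        exact ⟨⟨0, rfl⟩, hi⟩
      have hne : (Finset.univ.filter (fun v => T.Anc i v ∧ 0 < mass v)).Nonempty := ⟨i, hiin⟩
      obtain ⟨d, hd, hmax⟩ := Finset.exists_max_image _ T.depth hne
      simp only [Finset.mem_filter, Finset.mem_univ, true_and] at hd
      refine ⟨d, hd.1, hd.2, ?_⟩
      intro v hv hvpos
      by_contra hne'
      have h1 : T.Anc i v := T.anc_trans hd.1 hv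
      have hvin : v ∈ Finset.univ.filter (fun w => T.Anc i w ∧ 0 < mass w) := by
        simp only [Finset.mem_filter, Finset.mem_univ, true_and]
        exact ⟨h1, hvpos⟩
      have h2 := hmax v hvin
      have h3 := T.anc_depth hv (Ne.symm hne')
      omega
    set c : V → V := fun i => if h : 0 < mass i then (key i h).choose else i with hc
    have hc1 : ∀ i, 0 < mass i → T.Anc i (c i) := by
      intro i h; simp only [hc, dif_pos h]; exact (key i h).choose_spec.1
    have hc2 : ∀ i, 0 < mass i → 0 < mass (c i) := by
      intro i h; simp only [hc, dif_pos h]; exact (key i h).choose_spec.2.1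
    have hc3 : ∀ i, 0 < mass i → ∀ v, T.Anc (c i) v → 0 < mass v → v = c i := by
      intro i h; simp only [hc, dif_pos h]; exact (key i h).choose_spec.2.2
    set L : V → V := fun e => (T.exists_leaf_below e).choose with hL
    have hL1 : ∀ e, T.IsLeaf (L e) := fun e => (T.exists_leaf_below e).choose_spec.1
    have hL2 : ∀ e, T.Anc e (L e) := fun e => (T.exists_leaf_below e).choose_spec.2
    set S : Finset V := Finset.univ.filter (fun i => 0 < mass i) with hS
    set I : Finset V := S.image c with hI
    have hmemS : ∀ i, i ∈ S ↔ 0 < mass i := by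
      intro i; simp [hS]
    have hImem : ∀ e ∈ I, 0 < mass e ∧ ∀ v, T.Anc e v → 0 < mass v → v = e := by
      intro e he
      obtain ⟨i, hi, rfl⟩ := Finset.mem_image.mp he
      have hip := (hmemS i).mp hi
      exact ⟨hc2 i hip, hc3 i hip⟩
    have hm : (m : ℝ) = ∑ i ∈ S, mass i := by
      have h1 : (m : ℝ) = ∑ j : Fin m, (1:ℝ) := by simp
      rw [h1]
      calc ∑ j : Fin m, (1:ℝ) = ∑ j : Fin m, ∑ i : V, x i j :=
            Finset.sum_congr rfl fun j _ => (hx2 j).symm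
        _ = ∑ i : V, ∑ j : Fin m, x i j := Finset.sum_comm
        _ = ∑ i ∈ S, mass i := by
            symm
            apply Finset.sum_subset (Finset.filter_subset _ _)
            intro i _ hiS
            rw [hmemS] at hiS
            push_neg at hiS
            exact le_antisymm hiS (hmass0 i)
    have hmaps : ∀ i ∈ S, c i ∈ I := fun i hi => Finset.mem_image_of_mem c hi
    have hfib := Finset.sum_fiberwise_of_maps_to hmaps mass
    have hbound : (m:ℝ) ≤ I.card := by
      rw [hm, ← hfib]
      calc ∑ e ∈ I, ∑ i ∈ S.filter (fun i => c i = e), mass i ≤ ∑ e ∈ I, 1 := by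
            apply Finset.sum_le_sum
            intro e _
            have hsub : S.filter (fun i => c i = e) ⊆
                Finset.univ.filter (fun i => T.Anc i (L e)) := by
              intro i hi
              obtain ⟨hiS, hce⟩ := Finset.mem_filter.mp hi
              have hip := (hmemS i).mp hiS
              simp only [Finset.mem_filter, Finset.mem_univ, true_and]
              exact T.anc_trans (hce ▸ hc1 i hip) (hL2 e)
            calc ∑ i ∈ S.filter (fun i => c i = e), mass i
                ≤ ∑ i ∈ Finset.univ.filter (fun i => T.Anc i (L e)), mass i :=
                  Finset.sum_le_sum_of_subset_of_nonneg hsub fun i _ _ => hmass0 i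
              _ ≤ 1 := hx3 (L e) (hL1 e)
        _ = I.card := by simp
    have hinj : Set.InjOn L ↑I := by
      intro e1 he1 e2 he2 hLe
      rw [Finset.mem_coe] at he1 he2
      obtain ⟨hp1, hm1⟩ := hImem e1 he1
      obtain ⟨hp2, hm2⟩ := hImem e2 he2
      have ha1 : T.Anc e1 (L e1) := hL2 e1
      have ha2 : T.Anc e2 (L e1) := hLe ▸ hL2 e2
      rcases T.anc_total ha1 ha2 with h | h
      · exact (hm1 e2 h hp2).symm
      · exact hm2 e1 h hp1
    have hcard : I.card ≤ (Finset.univ.filter (fun v => T.IsLeaf v)).card := by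
      apply Finset.card_le_card_of_injOn L _ hinj
      intro e _
      simp only [Finset.mem_coe, Finset.mem_filter, Finset.mem_univ, true_and]
      exact hL1 e
    rw [hncard]
    have : (m:ℝ) ≤ (I.card : ℝ) := hbound
    exact_mod_cast le_trans (Nat.cast_le.mp this) hcard
  · intro h
    rw [hncard] at h
    have hcard : Fintype.card (Fin m) ≤ Fintype.card {v // T.IsLeaf v} := by
      rwa [Fintype.card_fin, Fintype.card_subtype]
    obtain ⟨f⟩ := Function.Embedding.nonempty_of_card_le hcard
    refine ⟨fun i j => if i = (f j : V) then 1 else 0, ?_, ?_, ?_, ?_⟩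
    · intro i j; dsimp only; split <;> norm_num
    · intro i
      rw [Finset.sum_boole]
      have : (Finset.univ.filter (fun j : Fin m => i = (f j : V))).card ≤ 1 := by
        apply Finset.card_le_one.mpr
        intro a ha b hb
        simp only [Finset.mem_filter] at ha hb
        exact f.injective (Subtype.coe_injective (ha.2.symm.trans hb.2))
      exact_mod_cast this
    · intro j
      simp [Finset.sum_ite_eq']
    · intro k hk
      rw [Finset.sum_comm]
      have hstep : ∀ j : Fin m,
          (∑ i ∈ Finset.univ.filter (fun i => T.Anc i k),
            (if i = (f j : V) then (1:ℝ) else 0)) = if (f j : V) = k then 1 else 0 := by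
        intro j
        rw [Finset.sum_ite_eq']
        congr 1
        simp only [Finset.mem_filter, Finset.mem_univ, true_and, eq_iff_iff]
        constructor
        · intro hanc; exact T.leaf_anc_eq (f j).2 hanc
        · rintro rfl; exact ⟨0, rfl⟩
      rw [Finset.sum_congr rfl fun j _ => hstep j, Finset.sum_boole]
      have : (Finset.univ.filter (fun j : Fin m => (f j : V) = k)).card ≤ 1 := by
        apply Finset.card_le_one.mpr
        intro a ha b hb
        simp only [Finset.mem_filter] at ha hb
        exact f.injective (Subtype.coe_injective (ha.2.trans hb.2.symm))
      exact_mod_cast this
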